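/- Let A_G, A_Z, A_T be PEPS tensors with physical dimensions d₁, d₂, d₃ and bond dimensions D₁, D₂, D₃ respectively, and let A = A_G ⊕ (A_Z ⊗ A_T) be the composed PEPS tensor with physical dimension d₁ + d₂·d₃ and bond dimension D₁ + D₂·D₃. Then for every rectangular a×b region R of the lattice, the range of the boundary map satisfies range χ(A,R) = ι₁(range χ(A_G,R)) ⊕ ι₂(range χ(A_Z,R) ⊗ range χ(A_T,R)), where ι₁ and ι₂ are the natural embeddings of (ℂ^{d₁})^{⊗ab} and of (ℂ^{d₂} ⊗ ℂ^{d₃})^{⊗ab} into ((ℂ^{d₁} ⊕ ℂ^{d₂} ⊗ ℂ^{d₃}))^{⊗ab} ≅ (ℂ^{d₁+d₂d₃})^{⊗ab}, and range χ(A_Z,R) ⊗ range χ(A_T,R) denotes the tensor product of the two subspaces inside (ℂ^{d₂})^{⊗ab} ⊗ (ℂ^{d₃})^{⊗ab} ≅ (ℂ^{d₂} ⊗ ℂ^{d₃})^{⊗ab}. -/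

import Mathlib

/-- A PEPS tensor with physical dimension `d` and bond dimension `D`: the entry
`A s u dn l r` is the value `A^{(u,dn,l,r)}(s)`. -/
abbrev PEPSTensor (d D : ℕ) := Fin d → Fin D → Fin D → Fin D → Fin D → ℂ

/-- The sites of a rectangular `a × b` region (first index: row, increasing downwards;
second index: column). -/
abbrev Sites (a b : ℕ) := Fin a × Fin b

/-- An assignment of virtual indices to the `2a + 2b` boundary legs of an `a × b` region:
the top, bottom, left and right legs. -/
abbrev BIdx (D a b : ℕ) :=
  (Fin b → Fin D) × (Fin b → Fin D) × (Fin a → Fin D) × (Fin a → Fin D)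

/-- The virtual indices `(u, dn, l, r)` seen by the site `p` of the region, given the
boundary assignment `C` and the assignments `eH`, `eV` on the interior bonds. -/
def siteVirtual {D a b : ℕ} (C : BIdx D a b)
    (eH : Fin a × Fin (b - 1) → Fin D) (eV : Fin (a - 1) × Fin b → Fin D)
    (p : Sites a b) : Fin D × Fin D × Fin D × Fin D :=
  ( if _h : (p.1 : ℕ) = 0 then C.1 p.2
      else eV (⟨(p.1 : ℕ) - 1, by have := p.1.isLt; omega⟩, p.2),
    if _h : (p.1 : ℕ) = a - 1 then C.2.1 p.2
      else eV (⟨(p.1 : ℕ), by have := p.1.isLt; omega⟩, p.2),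
    if _h : (p.2 : ℕ) = 0 then C.2.2.1 p.1
      else eH (p.1, ⟨(p.2 : ℕ) - 1, by have := p.2.isLt; omega⟩),
    if _h : (p.2 : ℕ) = b - 1 then C.2.2.2 p.1
      else eH (p.1, ⟨(p.2 : ℕ), by have := p.2.isLt; omega⟩) )

/-- The boundary map `χ(A, R)` of the `a × b` region `R`, as a matrix from the boundary
space `ℂ^{D^{2a+2b}}` to the physical space `(ℂ^d)^{⊗ab}`: the entry between the boundary
basis vector `C` and the physical basis vector `s` is the sum, over all assignments of
virtual indices to the interior bonds of `R`, of the product over all sites `p` of the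
entry of `A` with physical index `s p` and virtual indices read off from the interior
bonds and from `C`. -/
noncomputable def chi {d D : ℕ} (A : PEPSTensor d D) (a b : ℕ) :
    Matrix (Sites a b → Fin d) (BIdx D a b) ℂ :=
  fun s C =>
    ∑ eH : Fin a × Fin (b - 1) → Fin D, ∑ eV : Fin (a - 1) × Fin b → Fin D,
      ∏ p : Sites a b,
        A (s p) (siteVirtual C eH eV p).1 (siteVirtual C eH eV p).2.1
          (siteVirtual C eH eV p).2.2.1 (siteVirtual C eH eV p).2.2.2

/-- Decode a physical index of the second block of `Fin (d₁ + d₂·d₃)` as a pair in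
`Fin d₂ × Fin d₃`. -/
def splitIdx {d1 d2 d3 : ℕ} (s : Fin (d1 + d2 * d3)) (hs : d1 ≤ (s : ℕ)) :
    Fin d2 × Fin d3 :=
  finProdFinEquiv.symm ⟨(s : ℕ) - d1, by have := s.isLt; omega⟩

/-- The composed PEPS tensor `A = A_G ⊕ (A_Z ⊗ A_T)`, with physical dimension `d₁ + d₂·d₃`
and bond dimension `D₁ + D₂·D₃`: its entries with physical index and all four virtual
indices in the first block are those of `A_G`; its entries with physical index and all four
virtual indices in the second block are the products of the corresponding entries of `A_Z`
and `A_T`; all other (mixed) entries are `0`. -/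
noncomputable def composed {d1 D1 d2 D2 d3 D3 : ℕ} (AG : PEPSTensor d1 D1)
    (AZ : PEPSTensor d2 D2) (AT : PEPSTensor d3 D3) :
    PEPSTensor (d1 + d2 * d3) (D1 + D2 * D3) := fun s u dn l r =>
  if hs : (s : ℕ) < d1 then
    if h : (u : ℕ) < D1 ∧ (dn : ℕ) < D1 ∧ (l : ℕ) < D1 ∧ (r : ℕ) < D1 then
      AG ⟨s, hs⟩ ⟨u, h.1⟩ ⟨dn, h.2.1⟩ ⟨l, h.2.2.1⟩ ⟨r, h.2.2.2⟩
    else 0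
  else
    if h : D1 ≤ (u : ℕ) ∧ D1 ≤ (dn : ℕ) ∧ D1 ≤ (l : ℕ) ∧ D1 ≤ (r : ℕ) then
      AZ (splitIdx s (by omega)).1 (splitIdx u h.1).1 (splitIdx dn h.2.1).1
          (splitIdx l h.2.2.1).1 (splitIdx r h.2.2.2).1 *
      AT (splitIdx s (by omega)).2 (splitIdx u h.1).2 (splitIdx dn h.2.1).2
          (splitIdx l h.2.2.1).2 (splitIdx r h.2.2.2).2
    else 0

/-- The natural embedding `ι₁` of `(ℂ^{d₁})^{⊗ab}` into `(ℂ^{d₁+d₂d₃})^{⊗ab}` induced by the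
inclusion of `Fin d₁` as the first block, as a matrix. -/
noncomputable def iota1 (d1 d2 d3 a b : ℕ) :
    Matrix (Sites a b → Fin (d1 + d2 * d3)) (Sites a b → Fin d1) ℂ :=
  fun s' s => if ∀ p, (s' p : ℕ) = (s p : ℕ) then 1 else 0

/-- The natural embedding `ι₂` of `(ℂ^{d₂} ⊗ ℂ^{d₃})^{⊗ab}` into `(ℂ^{d₁+d₂d₃})^{⊗ab}`
induced by the identification of `Fin d₂ × Fin d₃` with the second block, as a matrix. -/
noncomputable def iota2 (d1 d2 d3 a b : ℕ) :
    Matrix (Sites a b → Fin (d1 + d2 * d3)) (Sites a b → Fin d2 × Fin d3) ℂ :=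
  fun s' s => if ∀ p, (s' p : ℕ) = d1 + (finProdFinEquiv (s p) : ℕ) then 1 else 0

/-- The tensor product of two subspaces `S ≤ (ℂ^{d₂})^{⊗ab}` and `T ≤ (ℂ^{d₃})^{⊗ab}`,
viewed inside `(ℂ^{d₂} ⊗ ℂ^{d₃})^{⊗ab}` (concretely, the span of the products of a vector
of `S` in the first factors with a vector of `T` in the second factors). -/
noncomputable def subspaceTensor {d2 d3 a b : ℕ}
    (S : Submodule ℂ ((Sites a b → Fin d2) → ℂ))
    (T : Submodule ℂ ((Sites a b → Fin d3) → ℂ)) :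
    Submodule ℂ ((Sites a b → Fin d2 × Fin d3) → ℂ) :=
  Submodule.span ℂ
    {f | ∃ g ∈ S, ∃ h ∈ T, f = fun s => g (fun p => (s p).1) * h (fun p => (s p).2)}


/-! ### Auxiliary definitions and lemmas -/

def embLo {m n : ℕ} (x : Fin m) : Fin (m + n) := ⟨x, by omega⟩

def embHi {m p q : ℕ} (x : Fin p × Fin q) : Fin (m + p * q) :=
  ⟨m + (finProdFinEquiv x : ℕ), by have := (finProdFinEquiv x).isLt; omega⟩

lemma embLo_injective {m n : ℕ} : Function.Injective (@embLo m n) := by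
  intro x y h
  have h2 := congrArg Fin.val h
  exact Fin.ext h2

lemma embHi_splitIdx {m p q : ℕ} (y : Fin (m + p * q)) (h : m ≤ (y : ℕ)) :
    embHi (splitIdx y h) = y := by
  apply Fin.ext
  show m + (finProdFinEquiv (splitIdx y h) : ℕ) = (y : ℕ)
  unfold splitIdx
  rw [Equiv.apply_symm_apply]
  show m + ((y : ℕ) - m) = (y : ℕ)
  omega

lemma fpe_splitIdx {m p q : ℕ} (y : Fin (m + p * q)) (h : m ≤ (y : ℕ)) :
    (finProdFinEquiv (splitIdx y h) : ℕ) = (y : ℕ) - m := by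
  unfold splitIdx
  rw [Equiv.apply_symm_apply]

def mapB {D D' a b : ℕ} (φ : Fin D → Fin D') (C : BIdx D a b) : BIdx D' a b :=
  (φ ∘ C.1, φ ∘ C.2.1, φ ∘ C.2.2.1, φ ∘ C.2.2.2)

def zipB (D1 : ℕ) {D2 D3 a b : ℕ} (C2 : BIdx D2 a b) (C3 : BIdx D3 a b) :
    BIdx (D1 + D2 * D3) a b :=
  (fun j => embHi (C2.1 j, C3.1 j), fun j => embHi (C2.2.1 j, C3.2.1 j),
   fun i => embHi (C2.2.2.1 i, C3.2.2.1 i), fun i => embHi (C2.2.2.2 i, C3.2.2.2 i))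

/-! accessors for `siteVirtual` -/

lemma sv_u_bd {D a b : ℕ} (C : BIdx D a b) (eH) (eV) (p : Sites a b) (h : (p.1 : ℕ) = 0) :
    (siteVirtual C eH eV p).1 = C.1 p.2 := by
  simp only [siteVirtual]; rw [dif_pos h]

lemma sv_u_in {D a b : ℕ} (C : BIdx D a b) (eH) (eV) (p : Sites a b) (h : (p.1 : ℕ) ≠ 0) :
    (siteVirtual C eH eV p).1 = eV (⟨(p.1 : ℕ) - 1, by have := p.1.isLt; omega⟩, p.2) := by
  simp only [siteVirtual]; rw [dif_neg h]

lemma sv_dn_bd {D a b : ℕ} (C : BIdx D a b) (eH) (eV) (p : Sites a b) (h : (p.1 : ℕ) = a - 1) :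
    (siteVirtual C eH eV p).2.1 = C.2.1 p.2 := by
  simp only [siteVirtual]; rw [dif_pos h]

lemma sv_dn_in {D a b : ℕ} (C : BIdx D a b) (eH) (eV) (p : Sites a b) (h : (p.1 : ℕ) ≠ a - 1) :
    (siteVirtual C eH eV p).2.1 = eV (⟨(p.1 : ℕ), by have := p.1.isLt; omega⟩, p.2) := by
  simp only [siteVirtual]; rw [dif_neg h]

lemma sv_l_bd {D a b : ℕ} (C : BIdx D a b) (eH) (eV) (p : Sites a b) (h : (p.2 : ℕ) = 0) :
    (siteVirtual C eH eV p).2.2.1 = C.2.2.1 p.1 := by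
  simp only [siteVirtual]; rw [dif_pos h]

lemma sv_l_in {D a b : ℕ} (C : BIdx D a b) (eH) (eV) (p : Sites a b) (h : (p.2 : ℕ) ≠ 0) :
    (siteVirtual C eH eV p).2.2.1 = eH (p.1, ⟨(p.2 : ℕ) - 1, by have := p.2.isLt; omega⟩) := by
  simp only [siteVirtual]; rw [dif_neg h]

lemma sv_r_bd {D a b : ℕ} (C : BIdx D a b) (eH) (eV) (p : Sites a b) (h : (p.2 : ℕ) = b - 1) :
    (siteVirtual C eH eV p).2.2.2 = C.2.2.2 p.1 := by
  simp only [siteVirtual]; rw [dif_pos h]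

lemma sv_r_in {D a b : ℕ} (C : BIdx D a b) (eH) (eV) (p : Sites a b) (h : (p.2 : ℕ) ≠ b - 1) :
    (siteVirtual C eH eV p).2.2.2 = eH (p.1, ⟨(p.2 : ℕ), by have := p.2.isLt; omega⟩) := by
  simp only [siteVirtual]; rw [dif_neg h]

lemma siteVirtual_mapB {D D' a b : ℕ} (φ : Fin D → Fin D') (C : BIdx D a b) (eH) (eV)
    (p : Sites a b) :
    siteVirtual (mapB φ C) (φ ∘ eH) (φ ∘ eV) p =
      (φ (siteVirtual C eH eV p).1, φ (siteVirtual C eH eV p).2.1,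
       φ (siteVirtual C eH eV p).2.2.1, φ (siteVirtual C eH eV p).2.2.2) := by
  simp only [siteVirtual, mapB]
  split_ifs <;> rfl

lemma siteVirtual_zipB {D1 D2 D3 a b : ℕ} (C2 : BIdx D2 a b) (C3 : BIdx D3 a b)
    (eH2) (eV2) (eH3) (eV3) (p : Sites a b) :
    siteVirtual (zipB D1 C2 C3) (fun x => embHi (eH2 x, eH3 x)) (fun x => embHi (eV2 x, eV3 x)) p =
      (embHi ((siteVirtual C2 eH2 eV2 p).1, (siteVirtual C3 eH3 eV3 p).1),
       embHi ((siteVirtual C2 eH2 eV2 p).2.1, (siteVirtual C3 eH3 eV3 p).2.1),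
       embHi ((siteVirtual C2 eH2 eV2 p).2.2.1, (siteVirtual C3 eH3 eV3 p).2.2.1),
       embHi ((siteVirtual C2 eH2 eV2 p).2.2.2, (siteVirtual C3 eH3 eV3 p).2.2.2)) := by
  simp only [siteVirtual, zipB]
  split_ifs <;> rfl

/-! entries of the composed tensor -/

lemma composed_lo {d1 D1 d2 D2 d3 D3 : ℕ} (AG : PEPSTensor d1 D1) (AZ : PEPSTensor d2 D2)
    (AT : PEPSTensor d3 D3) (s : Fin d1) (u dn l r : Fin D1) :
    composed AG AZ AT (embLo s) (embLo u) (embLo dn) (embLo l) (embLo r) = AG s u dn l r := by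
  unfold composed
  rw [dif_pos (show ((embLo (n := d2 * d3) s : Fin _) : ℕ) < d1 from s.isLt)]
  rw [dif_pos ⟨u.isLt, dn.isLt, l.isLt, r.isLt⟩]
  exact rfl

lemma composed_hi {d1 D1 d2 D2 d3 D3 : ℕ} (AG : PEPSTensor d1 D1) (AZ : PEPSTensor d2 D2)
    (AT : PEPSTensor d3 D3) (s : Fin d2 × Fin d3) (u dn l r : Fin D2 × Fin D3) :
    composed AG AZ AT (embHi s) (embHi u) (embHi dn) (embHi l) (embHi r) =
      AZ s.1 u.1 dn.1 l.1 r.1 * AT s.2 u.2 dn.2 l.2 r.2 := by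
  unfold composed
  rw [dif_neg (show ¬ ((embHi (m := d1) s : Fin _) : ℕ) < d1 by
    show ¬ d1 + (finProdFinEquiv s : ℕ) < d1; omega)]
  rw [dif_pos ⟨Nat.le_add_right _ _, Nat.le_add_right _ _, Nat.le_add_right _ _,
    Nat.le_add_right _ _⟩]
  have hsp : ∀ (x : Fin d2 × Fin d3) (hx : d1 ≤ ((embHi (m := d1) x : Fin _) : ℕ)),
      splitIdx (embHi x) hx = x := by
    intro x hx
    apply finProdFinEquiv.injective
    apply Fin.ext
    rw [fpe_splitIdx]
    show d1 + (finProdFinEquiv x : ℕ) - d1 = _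
    omega
  have hdp : ∀ (x : Fin D2 × Fin D3) (hx : D1 ≤ ((embHi (m := D1) x : Fin _) : ℕ)),
      splitIdx (embHi x) hx = x := by
    intro x hx
    apply finProdFinEquiv.injective
    apply Fin.ext
    rw [fpe_splitIdx]
    show D1 + (finProdFinEquiv x : ℕ) - D1 = _
    omega
  rw [hsp, hdp, hdp, hdp, hdp]

lemma composed_blocks {d1 D1 d2 D2 d3 D3 : ℕ} (AG : PEPSTensor d1 D1) (AZ : PEPSTensor d2 D2)
    (AT : PEPSTensor d3 D3) {s : Fin (d1 + d2 * d3)} {u dn l r : Fin (D1 + D2 * D3)}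
    (h : composed AG AZ AT s u dn l r ≠ 0) :
    ((s : ℕ) < d1 ↔ (u : ℕ) < D1) ∧ ((s : ℕ) < d1 ↔ (dn : ℕ) < D1) ∧
    ((s : ℕ) < d1 ↔ (l : ℕ) < D1) ∧ ((s : ℕ) < d1 ↔ (r : ℕ) < D1) := by
  unfold composed at h
  by_cases hs : (s : ℕ) < d1
  · rw [dif_pos hs] at h
    by_cases h4 : (u : ℕ) < D1 ∧ (dn : ℕ) < D1 ∧ (l : ℕ) < D1 ∧ (r : ℕ) < D1
    · exact ⟨iff_of_true hs h4.1, iff_of_true hs h4.2.1, iff_of_true hs h4.2.2.1,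
        iff_of_true hs h4.2.2.2⟩
    · rw [dif_neg h4] at h; exact absurd rfl h
  · rw [dif_neg hs] at h
    by_cases h4 : D1 ≤ (u : ℕ) ∧ D1 ≤ (dn : ℕ) ∧ D1 ≤ (l : ℕ) ∧ D1 ≤ (r : ℕ)
    · exact ⟨iff_of_false hs (by omega), iff_of_false hs (by omega),
        iff_of_false hs (by omega), iff_of_false hs (by omega)⟩
    · rw [dif_neg h4] at h; exact absurd rfl h

/-! rewriting `chi` in terms of site factors -/

def siteFactor {d D a b : ℕ} (A : PEPSTensor d D) (s : Sites a b → Fin d) (C : BIdx D a b)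
    (eH : Fin a × Fin (b - 1) → Fin D) (eV : Fin (a - 1) × Fin b → Fin D) (p : Sites a b) : ℂ :=
  A (s p) (siteVirtual C eH eV p).1 (siteVirtual C eH eV p).2.1
    (siteVirtual C eH eV p).2.2.1 (siteVirtual C eH eV p).2.2.2

lemma chi_eq {d D : ℕ} (A : PEPSTensor d D) (a b : ℕ) (s : Sites a b → Fin d) (C : BIdx D a b) :
    chi A a b s C = ∑ eH : Fin a × Fin (b - 1) → Fin D, ∑ eV : Fin (a - 1) × Fin b → Fin D,
      ∏ p : Sites a b, siteFactor A s C eH eV p := rfl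

/-! block-consistency of nonzero configurations -/

lemma blocks_consistent {d1 D1 d2 D2 d3 D3 : ℕ} (AG : PEPSTensor d1 D1) (AZ : PEPSTensor d2 D2)
    (AT : PEPSTensor d3 D3) {a b : ℕ} (ha : 0 < a) (hb : 0 < b)
    (s : Sites a b → Fin (d1 + d2 * d3)) (C : BIdx (D1 + D2 * D3) a b)
    (eH : Fin a × Fin (b - 1) → Fin (D1 + D2 * D3))
    (eV : Fin (a - 1) × Fin b → Fin (D1 + D2 * D3))
    (hne : ∏ p : Sites a b, siteFactor (composed AG AZ AT) s C eH eV p ≠ 0) :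
    (∀ p : Sites a b, ((s p : ℕ) < d1 ↔ (s (⟨0, ha⟩, ⟨0, hb⟩) : ℕ) < d1)) ∧
    (∀ j, ((C.1 j : ℕ) < D1 ↔ (s (⟨0, ha⟩, ⟨0, hb⟩) : ℕ) < d1)) ∧
    (∀ j, ((C.2.1 j : ℕ) < D1 ↔ (s (⟨0, ha⟩, ⟨0, hb⟩) : ℕ) < d1)) ∧
    (∀ i, ((C.2.2.1 i : ℕ) < D1 ↔ (s (⟨0, ha⟩, ⟨0, hb⟩) : ℕ) < d1)) ∧
    (∀ i, ((C.2.2.2 i : ℕ) < D1 ↔ (s (⟨0, ha⟩, ⟨0, hb⟩) : ℕ) < d1)) ∧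
    (∀ x, ((eH x : ℕ) < D1 ↔ (s (⟨0, ha⟩, ⟨0, hb⟩) : ℕ) < d1)) ∧
    (∀ x, ((eV x : ℕ) < D1 ↔ (s (⟨0, ha⟩, ⟨0, hb⟩) : ℕ) < d1)) := by
  have hfac : ∀ p : Sites a b, siteFactor (composed AG AZ AT) s C eH eV p ≠ 0 :=
    fun p => Finset.prod_ne_zero_iff.mp hne p (Finset.mem_univ p)
  have hblk : ∀ p : Sites a b,
      ((s p : ℕ) < d1 ↔ ((siteVirtual C eH eV p).1 : ℕ) < D1) ∧
      ((s p : ℕ) < d1 ↔ ((siteVirtual C eH eV p).2.1 : ℕ) < D1) ∧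
      ((s p : ℕ) < d1 ↔ ((siteVirtual C eH eV p).2.2.1 : ℕ) < D1) ∧
      ((s p : ℕ) < d1 ↔ ((siteVirtual C eH eV p).2.2.2 : ℕ) < D1) :=
    fun p => composed_blocks AG AZ AT (hfac p)
  have hV : ∀ (j : Fin b) (i : ℕ) (hia : i < a) (hi : i + 1 < a),
      ((s (⟨i, hia⟩, j) : ℕ) < d1 ↔ (s (⟨i + 1, hi⟩, j) : ℕ) < d1) := by
    intro j i hia hi
    have key1 : ((s (⟨i, hia⟩, j) : ℕ) < d1) ↔ ((eV (⟨i, by omega⟩, j) : ℕ) < D1) := by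
      have h1 := (hblk (⟨i, hia⟩, j)).2.1
      rwa [sv_dn_in C eH eV (⟨i, hia⟩, j) (show i ≠ a - 1 by omega)] at h1
    have key2 : ((s (⟨i + 1, hi⟩, j) : ℕ) < d1) ↔ ((eV (⟨i, by omega⟩, j) : ℕ) < D1) := by
      have h1 := (hblk (⟨i + 1, hi⟩, j)).1
      rwa [sv_u_in C eH eV (⟨i + 1, hi⟩, j) (show i + 1 ≠ 0 by omega)] at h1
    exact key1.trans key2.symm
  have hH : ∀ (i : Fin a) (j : ℕ) (hjb : j < b) (hj : j + 1 < b),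
      ((s (i, ⟨j, hjb⟩) : ℕ) < d1 ↔ (s (i, ⟨j + 1, hj⟩) : ℕ) < d1) := by
    intro i j hjb hj
    have key1 : ((s (i, ⟨j, hjb⟩) : ℕ) < d1) ↔ ((eH (i, ⟨j, by omega⟩) : ℕ) < D1) := by
      have h1 := (hblk (i, ⟨j, hjb⟩)).2.2.2
      rwa [sv_r_in C eH eV (i, ⟨j, hjb⟩) (show j ≠ b - 1 by omega)] at h1
    have key2 : ((s (i, ⟨j + 1, hj⟩) : ℕ) < d1) ↔ ((eH (i, ⟨j, by omega⟩) : ℕ) < D1) := by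
      have h1 := (hblk (i, ⟨j + 1, hj⟩)).2.2.1
      rwa [sv_l_in C eH eV (i, ⟨j + 1, hj⟩) (show j + 1 ≠ 0 by omega)] at h1
    exact key1.trans key2.symm
  have hcol : ∀ (j : Fin b) (i : ℕ) (hi : i < a),
      ((s (⟨i, hi⟩, j) : ℕ) < d1 ↔ (s (⟨0, ha⟩, j) : ℕ) < d1) := by
    intro j i
    induction i with
    | zero => intro hi; exact Iff.rfl
    | succ n ih =>
      intro hi
      exact (hV j n (by omega) hi).symm.trans (ih (by omega))
  have hrow : ∀ (i : Fin a) (j : ℕ) (hj : j < b),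
      ((s (i, ⟨j, hj⟩) : ℕ) < d1 ↔ (s (i, ⟨0, hb⟩) : ℕ) < d1) := by
    intro i j
    induction j with
    | zero => intro hj; exact Iff.rfl
    | succ n ih =>
      intro hj
      exact (hH i n (by omega) hj).symm.trans (ih (by omega))
  have horig : ∀ p : Sites a b, ((s p : ℕ) < d1 ↔ (s (⟨0, ha⟩, ⟨0, hb⟩) : ℕ) < d1) := by
    rintro ⟨i, j⟩
    exact (hrow i j.1 j.2).trans (hcol ⟨0, hb⟩ i.1 i.2)
  refine ⟨horig, ?_, ?_, ?_, ?_, ?_, ?_⟩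
  · intro j
    have key : ((s (⟨0, ha⟩, j) : ℕ) < d1) ↔ ((C.1 j : ℕ) < D1) := by
      have h1 := (hblk (⟨0, ha⟩, j)).1
      rwa [sv_u_bd C eH eV (⟨0, ha⟩, j) rfl] at h1
    exact key.symm.trans (horig _)
  · intro j
    have key : ((s (⟨a - 1, by omega⟩, j) : ℕ) < d1) ↔ ((C.2.1 j : ℕ) < D1) := by
      have h1 := (hblk (⟨a - 1, by omega⟩, j)).2.1
      rwa [sv_dn_bd C eH eV (⟨a - 1, by omega⟩, j) rfl] at h1
    exact key.symm.trans (horig _)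
  · intro i
    have key : ((s (i, ⟨0, hb⟩) : ℕ) < d1) ↔ ((C.2.2.1 i : ℕ) < D1) := by
      have h1 := (hblk (i, ⟨0, hb⟩)).2.2.1
      rwa [sv_l_bd C eH eV (i, ⟨0, hb⟩) rfl] at h1
    exact key.symm.trans (horig _)
  · intro i
    have key : ((s (i, ⟨b - 1, by omega⟩) : ℕ) < d1) ↔ ((C.2.2.2 i : ℕ) < D1) := by
      have h1 := (hblk (i, ⟨b - 1, by omega⟩)).2.2.2
      rwa [sv_r_bd C eH eV (i, ⟨b - 1, by omega⟩) rfl] at h1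
    exact key.symm.trans (horig _)
  · intro x
    have key : ((s (x.1, ⟨(x.2 : ℕ), by have := x.2.isLt; omega⟩) : ℕ) < d1) ↔
        ((eH x : ℕ) < D1) := by
      have h1 := (hblk (x.1, ⟨(x.2 : ℕ), by have := x.2.isLt; omega⟩)).2.2.2
      rwa [sv_r_in C eH eV (x.1, ⟨(x.2 : ℕ), by have := x.2.isLt; omega⟩)
        (show (x.2 : ℕ) ≠ b - 1 by have := x.2.isLt; omega)] at h1
    exact key.symm.trans (horig _)
  · intro x
    have key : ((s (⟨(x.1 : ℕ), by have := x.1.isLt; omega⟩, x.2) : ℕ) < d1) ↔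
        ((eV x : ℕ) < D1) := by
      have h1 := (hblk (⟨(x.1 : ℕ), by have := x.1.isLt; omega⟩, x.2)).2.1
      rwa [sv_dn_in C eH eV (⟨(x.1 : ℕ), by have := x.1.isLt; omega⟩, x.2)
        (show (x.1 : ℕ) ≠ a - 1 by have := x.1.isLt; omega)] at h1
    exact key.symm.trans (horig _)

/-! sum manipulation helpers -/

lemma sum_comp_of_support {α β : Type*} [Fintype α] [Fintype β] [DecidableEq β]
    (e : α → β) (he : Function.Injective e) (f : β → ℂ)
    (h0 : ∀ y : β, (∀ x, e x ≠ y) → f y = 0) : (∑ y, f y) = ∑ x, f (e x) := by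
  classical
  have h1 : (∑ x, f (e x)) = ∑ y ∈ Finset.univ.image e, f y :=
    (Finset.sum_image (fun x _ y _ h => he h)).symm
  have h2 : (∑ y ∈ Finset.univ.image e, f y) = ∑ y, f y :=
    Finset.sum_subset (Finset.subset_univ _)
      (fun y _ hy => h0 y (fun x hx => hy (Finset.mem_image.mpr ⟨x, Finset.mem_univ x, hx⟩)))
  exact (h1.trans h2).symm

lemma sum_pair_split {X : Type*} [Fintype X] [DecidableEq X] {p q : ℕ} (F : (X → Fin p × Fin q) → ℂ) :
    (∑ g : X → Fin p × Fin q, F g) =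
      ∑ g2 : X → Fin p, ∑ g3 : X → Fin q, F (fun x => (g2 x, g3 x)) := by
  rw [← Equiv.sum_comp (Equiv.arrowProdEquivProdArrow X (fun _ => Fin p) (fun _ => Fin q)).symm F]
  rw [Fintype.sum_prod_type]
  rfl

/-! the two pure-block column formulas -/

lemma chi_composed_emb1 {d1 D1 d2 D2 d3 D3 : ℕ} (AG : PEPSTensor d1 D1) (AZ : PEPSTensor d2 D2)
    (AT : PEPSTensor d3 D3) (a b : ℕ) (C1 : BIdx D1 a b) (s : Sites a b → Fin (d1 + d2 * d3)) :
    chi (composed AG AZ AT) a b s (mapB embLo C1) =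
      if h : ∀ p : Sites a b, (s p : ℕ) < d1 then
        chi AG a b (fun p => ⟨(s p : ℕ), h p⟩) C1 else 0 := by
  split_ifs with h
  · have hinjH : Function.Injective
        (fun g : Fin a × Fin (b - 1) → Fin D1 => (embLo (n := D2 * D3)) ∘ g) :=
      fun g g' hg => funext fun x => embLo_injective (congrFun hg x)
    have hinjV : Function.Injective
        (fun g : Fin (a - 1) × Fin b → Fin D1 => (embLo (n := D2 * D3)) ∘ g) :=
      fun g g' hg => funext fun x => embLo_injective (congrFun hg x)
    have hzH : ∀ eH : Fin a × Fin (b - 1) → Fin (D1 + D2 * D3),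
        (∀ g : Fin a × Fin (b - 1) → Fin D1, (embLo (n := D2 * D3)) ∘ g ≠ eH) →
        (∑ eV : Fin (a - 1) × Fin b → Fin (D1 + D2 * D3),
          ∏ p : Sites a b, siteFactor (composed AG AZ AT) s (mapB embLo C1) eH eV p) = 0 := by
      intro eH hg
      obtain ⟨x, hx⟩ : ∃ x, D1 ≤ (eH x : ℕ) := by
        by_contra hc
        push_neg at hc
        exact hg (fun x => ⟨(eH x : ℕ), hc x⟩) (funext fun x => Fin.ext rfl)
      have ha : 0 < a := x.1.pos
      have hb : 0 < b := by have := x.2.pos; omega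
      apply Finset.sum_eq_zero
      intro eV _
      by_contra hne
      obtain ⟨hs0, _, _, _, _, hbH, _⟩ := blocks_consistent AG AZ AT ha hb s _ eH eV hne
      have := (hbH x).mpr (h _)
      omega
    have hzV : ∀ (eH' : Fin a × Fin (b - 1) → Fin D1)
        (eV : Fin (a - 1) × Fin b → Fin (D1 + D2 * D3)),
        (∀ g : Fin (a - 1) × Fin b → Fin D1, (embLo (n := D2 * D3)) ∘ g ≠ eV) →
        (∏ p : Sites a b,
          siteFactor (composed AG AZ AT) s (mapB embLo C1) ((embLo (n := D2 * D3)) ∘ eH') eV p)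
          = 0 := by
      intro eH' eV hg
      obtain ⟨x, hx⟩ : ∃ x, D1 ≤ (eV x : ℕ) := by
        by_contra hc
        push_neg at hc
        exact hg (fun x => ⟨(eV x : ℕ), hc x⟩) (funext fun x => Fin.ext rfl)
      have ha : 0 < a := by have := x.1.pos; omega
      have hb : 0 < b := x.2.pos
      by_contra hne
      obtain ⟨hs0, _, _, _, _, _, hbV⟩ := blocks_consistent AG AZ AT ha hb s _ _ eV hne
      have := (hbV x).mpr (h _)
      omega
    rw [chi_eq, chi_eq]
    calc (∑ eH : Fin a × Fin (b - 1) → Fin (D1 + D2 * D3),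
            ∑ eV : Fin (a - 1) × Fin b → Fin (D1 + D2 * D3),
            ∏ p : Sites a b, siteFactor (composed AG AZ AT) s (mapB embLo C1) eH eV p)
        = ∑ eH' : Fin a × Fin (b - 1) → Fin D1,
            ∑ eV : Fin (a - 1) × Fin b → Fin (D1 + D2 * D3),
            ∏ p : Sites a b,
              siteFactor (composed AG AZ AT) s (mapB embLo C1) ((embLo (n := D2 * D3)) ∘ eH') eV p :=
          sum_comp_of_support _ hinjH _ hzH
      _ = ∑ eH' : Fin a × Fin (b - 1) → Fin D1,
            ∑ eV' : Fin (a - 1) × Fin b → Fin D1,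
            ∏ p : Sites a b,
              siteFactor (composed AG AZ AT) s (mapB embLo C1) ((embLo (n := D2 * D3)) ∘ eH')
                ((embLo (n := D2 * D3)) ∘ eV') p :=
          Finset.sum_congr rfl (fun eH' _ => sum_comp_of_support _ hinjV _ (hzV eH'))
      _ = ∑ eH' : Fin a × Fin (b - 1) → Fin D1,
            ∑ eV' : Fin (a - 1) × Fin b → Fin D1,
            ∏ p : Sites a b, siteFactor AG (fun p => ⟨(s p : ℕ), h p⟩) C1 eH' eV' p := by
          refine Finset.sum_congr rfl fun eH' _ => Finset.sum_congr rfl fun eV' _ =>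
            Finset.prod_congr rfl fun p _ => ?_
          unfold siteFactor
          rw [siteVirtual_mapB]
          exact composed_lo AG AZ AT ⟨(s p : ℕ), h p⟩ _ _ _ _
  · push_neg at h
    obtain ⟨p0, hp0⟩ := h
    have ha : 0 < a := p0.1.pos
    have hb : 0 < b := p0.2.pos
    rw [chi_eq]
    apply Finset.sum_eq_zero
    intro eH _
    apply Finset.sum_eq_zero
    intro eV _
    by_contra hne
    obtain ⟨hs0, htop, _, _, _, _, _⟩ := blocks_consistent AG AZ AT ha hb s _ eH eV hne
    have hc := (htop ⟨0, hb⟩).mp (C1.1 ⟨0, hb⟩).isLt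
    have := (hs0 p0).mpr hc
    omega

lemma chi_composed_emb2 {d1 D1 d2 D2 d3 D3 : ℕ} (AG : PEPSTensor d1 D1) (AZ : PEPSTensor d2 D2)
    (AT : PEPSTensor d3 D3) (a b : ℕ) (C2 : BIdx D2 a b) (C3 : BIdx D3 a b)
    (s : Sites a b → Fin (d1 + d2 * d3)) :
    chi (composed AG AZ AT) a b s (zipB D1 C2 C3) =
      if h : ∀ p : Sites a b, d1 ≤ (s p : ℕ) then
        chi AZ a b (fun p => (splitIdx (s p) (h p)).1) C2 *
        chi AT a b (fun p => (splitIdx (s p) (h p)).2) C3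
      else 0 := by
  split_ifs with h
  · have hinjH : Function.Injective
        (fun g : Fin a × Fin (b - 1) → Fin D2 × Fin D3 => (embHi (m := D1)) ∘ g) := by
      intro g g' hg
      funext x
      have h1 := congrFun hg x
      apply finProdFinEquiv.injective
      apply Fin.ext
      have h2 := congrArg Fin.val h1
      simpa [embHi] using h2
    have hinjV : Function.Injective
        (fun g : Fin (a - 1) × Fin b → Fin D2 × Fin D3 => (embHi (m := D1)) ∘ g) := by
      intro g g' hg
      funext x
      have h1 := congrFun hg x
      apply finProdFinEquiv.injective
      apply Fin.ext
      have h2 := congrArg Fin.val h1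
      simpa [embHi] using h2
    have hcf : ∀ (ha : 0 < a) (hb : 0 < b), ¬ ((s (⟨0, ha⟩, ⟨0, hb⟩) : ℕ) < d1) := by
      intro ha hb
      have := h (⟨0, ha⟩, ⟨0, hb⟩)
      omega
    have hzH : ∀ eH : Fin a × Fin (b - 1) → Fin (D1 + D2 * D3),
        (∀ g : Fin a × Fin (b - 1) → Fin D2 × Fin D3, (embHi (m := D1)) ∘ g ≠ eH) →
        (∑ eV : Fin (a - 1) × Fin b → Fin (D1 + D2 * D3),
          ∏ p : Sites a b, siteFactor (composed AG AZ AT) s (zipB D1 C2 C3) eH eV p) = 0 := by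
      intro eH hg
      obtain ⟨x, hx⟩ : ∃ x, (eH x : ℕ) < D1 := by
        by_contra hc
        push_neg at hc
        exact hg (fun x => splitIdx (eH x) (hc x)) (funext fun x => embHi_splitIdx _ _)
      have ha : 0 < a := x.1.pos
      have hb : 0 < b := by have := x.2.pos; omega
      apply Finset.sum_eq_zero
      intro eV _
      by_contra hne
      obtain ⟨hs0, _, _, _, _, hbH, _⟩ := blocks_consistent AG AZ AT ha hb s _ eH eV hne
      exact hcf ha hb ((hbH x).mp hx)
    have hzV : ∀ (gH : Fin a × Fin (b - 1) → Fin D2 × Fin D3)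
        (eV : Fin (a - 1) × Fin b → Fin (D1 + D2 * D3)),
        (∀ g : Fin (a - 1) × Fin b → Fin D2 × Fin D3, (embHi (m := D1)) ∘ g ≠ eV) →
        (∏ p : Sites a b,
          siteFactor (composed AG AZ AT) s (zipB D1 C2 C3) ((embHi (m := D1)) ∘ gH) eV p) = 0 := by
      intro gH eV hg
      obtain ⟨x, hx⟩ : ∃ x, (eV x : ℕ) < D1 := by
        by_contra hc
        push_neg at hc
        exact hg (fun x => splitIdx (eV x) (hc x)) (funext fun x => embHi_splitIdx _ _)
      have ha : 0 < a := by have := x.1.pos; omega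
      have hb : 0 < b := x.2.pos
      by_contra hne
      obtain ⟨hs0, _, _, _, _, _, hbV⟩ := blocks_consistent AG AZ AT ha hb s _ _ eV hne
      exact hcf ha hb ((hbV x).mp hx)
    rw [chi_eq, chi_eq, chi_eq]
    calc (∑ eH : Fin a × Fin (b - 1) → Fin (D1 + D2 * D3),
            ∑ eV : Fin (a - 1) × Fin b → Fin (D1 + D2 * D3),
            ∏ p : Sites a b, siteFactor (composed AG AZ AT) s (zipB D1 C2 C3) eH eV p)
        = ∑ gH : Fin a × Fin (b - 1) → Fin D2 × Fin D3,
            ∑ eV : Fin (a - 1) × Fin b → Fin (D1 + D2 * D3),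
            ∏ p : Sites a b,
              siteFactor (composed AG AZ AT) s (zipB D1 C2 C3) ((embHi (m := D1)) ∘ gH) eV p :=
          sum_comp_of_support _ hinjH _ hzH
      _ = ∑ gH : Fin a × Fin (b - 1) → Fin D2 × Fin D3,
            ∑ gV : Fin (a - 1) × Fin b → Fin D2 × Fin D3,
            ∏ p : Sites a b,
              siteFactor (composed AG AZ AT) s (zipB D1 C2 C3) ((embHi (m := D1)) ∘ gH)
                ((embHi (m := D1)) ∘ gV) p :=
          Finset.sum_congr rfl (fun gH _ => sum_comp_of_support _ hinjV _ (hzV gH))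
      _ = ∑ eH2 : Fin a × Fin (b - 1) → Fin D2, ∑ eH3 : Fin a × Fin (b - 1) → Fin D3,
            ∑ gV : Fin (a - 1) × Fin b → Fin D2 × Fin D3,
            ∏ p : Sites a b,
              siteFactor (composed AG AZ AT) s (zipB D1 C2 C3)
                (fun x => embHi (eH2 x, eH3 x)) ((embHi (m := D1)) ∘ gV) p := by
          rw [sum_pair_split]
          rfl
      _ = ∑ eH2 : Fin a × Fin (b - 1) → Fin D2, ∑ eH3 : Fin a × Fin (b - 1) → Fin D3,
            ∑ eV2 : Fin (a - 1) × Fin b → Fin D2, ∑ eV3 : Fin (a - 1) × Fin b → Fin D3,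
            ∏ p : Sites a b,
              siteFactor (composed AG AZ AT) s (zipB D1 C2 C3)
                (fun x => embHi (eH2 x, eH3 x)) (fun x => embHi (eV2 x, eV3 x)) p := by
          refine Finset.sum_congr rfl fun eH2 _ => Finset.sum_congr rfl fun eH3 _ => ?_
          rw [sum_pair_split]
          rfl
      _ = ∑ eH2 : Fin a × Fin (b - 1) → Fin D2, ∑ eH3 : Fin a × Fin (b - 1) → Fin D3,
            ∑ eV2 : Fin (a - 1) × Fin b → Fin D2, ∑ eV3 : Fin (a - 1) × Fin b → Fin D3,
            (∏ p : Sites a b, siteFactor AZ (fun p => (splitIdx (s p) (h p)).1) C2 eH2 eV2 p) *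
            (∏ p : Sites a b, siteFactor AT (fun p => (splitIdx (s p) (h p)).2) C3 eH3 eV3 p) := by
          refine Finset.sum_congr rfl fun eH2 _ => Finset.sum_congr rfl fun eH3 _ =>
            Finset.sum_congr rfl fun eV2 _ => Finset.sum_congr rfl fun eV3 _ => ?_
          rw [← Finset.prod_mul_distrib]
          refine Finset.prod_congr rfl fun p _ => ?_
          unfold siteFactor
          rw [siteVirtual_zipB]
          conv_lhs => rw [← embHi_splitIdx (s p) (h p)]
          exact composed_hi AG AZ AT _ _ _ _ _
      _ = (∑ eH2 : Fin a × Fin (b - 1) → Fin D2, ∑ eV2 : Fin (a - 1) × Fin b → Fin D2,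
            ∏ p : Sites a b, siteFactor AZ (fun p => (splitIdx (s p) (h p)).1) C2 eH2 eV2 p) *
          (∑ eH3 : Fin a × Fin (b - 1) → Fin D3, ∑ eV3 : Fin (a - 1) × Fin b → Fin D3,
            ∏ p : Sites a b, siteFactor AT (fun p => (splitIdx (s p) (h p)).2) C3 eH3 eV3 p) := by
          rw [Finset.sum_mul_sum]
          refine Finset.sum_congr rfl fun eH2 _ => Finset.sum_congr rfl fun eH3 _ => ?_
          exact (Finset.sum_mul_sum _ _ _ _).symm
  · push_neg at h
    obtain ⟨p0, hp0⟩ := h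
    have ha : 0 < a := p0.1.pos
    have hb : 0 < b := p0.2.pos
    rw [chi_eq]
    apply Finset.sum_eq_zero
    intro eH _
    apply Finset.sum_eq_zero
    intro eV _
    by_contra hne
    obtain ⟨hs0, htop, _, _, _, _, _⟩ := blocks_consistent AG AZ AT ha hb s _ eH eV hne
    have hcc := (hs0 p0).mp hp0
    have h2 := (htop ⟨0, hb⟩).mpr hcc
    have h3 : D1 ≤ ((zipB D1 C2 C3).1 ⟨0, hb⟩ : ℕ) := Nat.le_add_right _ _
    omega

/-! degenerate regions -/

lemma chi_degenerate {d D a b : ℕ} (A : PEPSTensor d D) (hab : a = 0 ∨ b = 0)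
    (s : Sites a b → Fin d) (C : BIdx D a b) : chi A a b s C = 1 := by
  have hS : IsEmpty (Sites a b) :=
    ⟨fun p => by have h1 := p.1.isLt; have h2 := p.2.isLt; rcases hab with h | h <;> omega⟩
  have hH : IsEmpty (Fin a × Fin (b - 1)) :=
    ⟨fun x => by have h1 := x.1.isLt; have h2 := x.2.isLt; rcases hab with h | h <;> omega⟩
  have hV : IsEmpty (Fin (a - 1) × Fin b) :=
    ⟨fun x => by have h1 := x.1.isLt; have h2 := x.2.isLt; rcases hab with h | h <;> omega⟩
  rw [chi_eq]
  have h1 : ∀ (eH : Fin a × Fin (b - 1) → Fin D) (eV : Fin (a - 1) × Fin b → Fin D),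
      (∏ p : Sites a b, siteFactor A s C eH eV p) = 1 := by
    intro eH eV
    rw [Finset.univ_eq_empty, Finset.prod_empty]
  simp only [h1]
  haveI := hH
  haveI := hV
  rw [Fintype.sum_unique, Fintype.sum_unique]

/-! `mulVec` of the embeddings -/

lemma iota1_mulVec {d1 d2 d3 a b : ℕ} (v : (Sites a b → Fin d1) → ℂ)
    (s : Sites a b → Fin (d1 + d2 * d3)) :
    (iota1 d1 d2 d3 a b).mulVec v s =
      if h : ∀ p : Sites a b, (s p : ℕ) < d1 then v (fun p => ⟨(s p : ℕ), h p⟩) else 0 := by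
  show (∑ s1, iota1 d1 d2 d3 a b s s1 * v s1) = _
  split_ifs with h
  · have hzero : ∀ s1 ∈ Finset.univ, s1 ≠ (fun p => (⟨(s p : ℕ), h p⟩ : Fin d1)) →
        iota1 d1 d2 d3 a b s s1 * v s1 = 0 := by
      intro s1 _ hs1
      simp only [iota1]
      rw [if_neg, zero_mul]
      intro hc
      exact hs1 (funext fun p => Fin.ext (hc p).symm)
    rw [Finset.sum_eq_single_of_mem _ (Finset.mem_univ _) hzero]
    simp [iota1]
  · apply Finset.sum_eq_zero
    intro s1 _
    simp only [iota1]
    rw [if_neg, zero_mul]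
    intro hc
    exact h (fun p => by rw [hc p]; exact (s1 p).isLt)

lemma iota2_mulVec {d1 d2 d3 a b : ℕ} (v : (Sites a b → Fin d2 × Fin d3) → ℂ)
    (s : Sites a b → Fin (d1 + d2 * d3)) :
    (iota2 d1 d2 d3 a b).mulVec v s =
      if h : ∀ p : Sites a b, d1 ≤ (s p : ℕ) then v (fun p => splitIdx (s p) (h p)) else 0 := by
  show (∑ s1, iota2 d1 d2 d3 a b s s1 * v s1) = _
  split_ifs with h
  · have hzero : ∀ s1 ∈ Finset.univ, s1 ≠ (fun p => splitIdx (s p) (h p)) →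
        iota2 d1 d2 d3 a b s s1 * v s1 = 0 := by
      intro s1 _ hs1
      simp only [iota2]
      rw [if_neg, zero_mul]
      intro hc
      apply hs1
      funext p
      have h1 : finProdFinEquiv (s1 p) =
          (⟨(s p : ℕ) - d1, by have := (s p).isLt; have h2 := h p; omega⟩ : Fin (d2 * d3)) :=
        Fin.ext (show (finProdFinEquiv (s1 p) : ℕ) = (s p : ℕ) - d1 by
          have := hc p; omega)
      show s1 p = finProdFinEquiv.symm _
      rw [← h1, Equiv.symm_apply_apply]
    rw [Finset.sum_eq_single_of_mem _ (Finset.mem_univ _) hzero]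
    simp only [iota2]
    rw [if_pos, one_mul]
    intro p
    rw [fpe_splitIdx]
    have := h p
    omega
  · apply Finset.sum_eq_zero
    intro s1 _
    simp only [iota2]
    rw [if_neg, zero_mul]
    intro hc
    push_neg at h
    obtain ⟨p, hp⟩ := h
    have h1 := hc p
    omega

lemma col_mem {m n : Type*} [Fintype n] [DecidableEq n] (M : Matrix m n ℂ) (j : n) :
    (fun i => M i j) ∈ LinearMap.range M.mulVecLin :=
  ⟨Pi.single j 1, by
    funext i
    rw [Matrix.mulVecLin_apply, Matrix.mulVec_single]
    exact mul_one _⟩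

/-- For the composed tensor `A = A_G ⊕ (A_Z ⊗ A_T)` and every rectangular `a × b` region
`R`, the range of the boundary map satisfies
`range χ(A,R) = ι₁(range χ(A_G,R)) ⊕ ι₂(range χ(A_Z,R) ⊗ range χ(A_T,R))`. -/
theorem range_chi_composed {d1 D1 d2 D2 d3 D3 : ℕ} (AG : PEPSTensor d1 D1)
    (AZ : PEPSTensor d2 D2) (AT : PEPSTensor d3 D3) (a b : ℕ) :
    LinearMap.range (chi (composed AG AZ AT) a b).mulVecLin =
      Submodule.map (iota1 d1 d2 d3 a b).mulVecLin
        (LinearMap.range (chi AG a b).mulVecLin) ⊔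
      Submodule.map (iota2 d1 d2 d3 a b).mulVecLin
        (subspaceTensor (LinearMap.range (chi AZ a b).mulVecLin)
          (LinearMap.range (chi AT a b).mulVecLin)) := by
  classical
  apply le_antisymm
  · rw [Matrix.range_mulVecLin, Submodule.span_le]
    rintro _ ⟨C, rfl⟩
    simp only [SetLike.mem_coe]
    by_cases hLo : (∀ j, (C.1 j : ℕ) < D1) ∧ (∀ j, (C.2.1 j : ℕ) < D1) ∧
        (∀ i, (C.2.2.1 i : ℕ) < D1) ∧ (∀ i, (C.2.2.2 i : ℕ) < D1)
    · obtain ⟨h1, h2, h3, h4⟩ := hLo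
      set C1 : BIdx D1 a b :=
        (fun j => ⟨(C.1 j : ℕ), h1 j⟩, fun j => ⟨(C.2.1 j : ℕ), h2 j⟩,
          fun i => ⟨(C.2.2.1 i : ℕ), h3 i⟩, fun i => ⟨(C.2.2.2 i : ℕ), h4 i⟩) with hC1
      have hCeq : C = mapB (embLo (n := D2 * D3)) C1 := by
        refine Prod.ext ?_ (Prod.ext ?_ (Prod.ext ?_ ?_)) <;> funext x <;> exact Fin.ext rfl
      apply Submodule.mem_sup_left
      refine ⟨fun s1 => chi AG a b s1 C1, col_mem _ _, funext fun s => ?_⟩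
      rw [Matrix.mulVecLin_apply, iota1_mulVec, Matrix.col_apply, hCeq,
        chi_composed_emb1]
    · by_cases hHi : (∀ j, D1 ≤ (C.1 j : ℕ)) ∧ (∀ j, D1 ≤ (C.2.1 j : ℕ)) ∧
          (∀ i, D1 ≤ (C.2.2.1 i : ℕ)) ∧ (∀ i, D1 ≤ (C.2.2.2 i : ℕ))
      · obtain ⟨h1, h2, h3, h4⟩ := hHi
        set C2 : BIdx D2 a b :=
          (fun j => (splitIdx (C.1 j) (h1 j)).1, fun j => (splitIdx (C.2.1 j) (h2 j)).1,
            fun i => (splitIdx (C.2.2.1 i) (h3 i)).1,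
            fun i => (splitIdx (C.2.2.2 i) (h4 i)).1) with hC2
        set C3 : BIdx D3 a b :=
          (fun j => (splitIdx (C.1 j) (h1 j)).2, fun j => (splitIdx (C.2.1 j) (h2 j)).2,
            fun i => (splitIdx (C.2.2.1 i) (h3 i)).2,
            fun i => (splitIdx (C.2.2.2 i) (h4 i)).2) with hC3
        have hCeq : C = zipB D1 C2 C3 := by
          refine Prod.ext ?_ (Prod.ext ?_ (Prod.ext ?_ ?_))
          · funext x; exact (embHi_splitIdx (C.1 x) (h1 x)).symm
          · funext x; exact (embHi_splitIdx (C.2.1 x) (h2 x)).symm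
          · funext x; exact (embHi_splitIdx (C.2.2.1 x) (h3 x)).symm
          · funext x; exact (embHi_splitIdx (C.2.2.2 x) (h4 x)).symm
        apply Submodule.mem_sup_right
        refine ⟨fun s1 => chi AZ a b (fun p => (s1 p).1) C2 * chi AT a b (fun p => (s1 p).2) C3,
          Submodule.subset_span
            ⟨fun t => chi AZ a b t C2, col_mem (chi AZ a b) C2,
             fun t => chi AT a b t C3, col_mem (chi AT a b) C3, rfl⟩,
          funext fun s => ?_⟩
        rw [Matrix.mulVecLin_apply, iota2_mulVec, Matrix.col_apply, hCeq,
          chi_composed_emb2]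
      · by_cases hab : 0 < a ∧ 0 < b
        · have hz : (chi (composed AG AZ AT) a b).transpose C = 0 := by
            funext s
            show chi (composed AG AZ AT) a b s C = 0
            rw [chi_eq]
            apply Finset.sum_eq_zero
            intro eH _
            apply Finset.sum_eq_zero
            intro eV _
            by_contra hne
            obtain ⟨hs0, ht, hb2, hl, hr, _, _⟩ :=
              blocks_consistent AG AZ AT hab.1 hab.2 s C eH eV hne
            by_cases hc : (s (⟨0, hab.1⟩, ⟨0, hab.2⟩) : ℕ) < d1
            · exact hLo ⟨fun j => (ht j).mpr hc, fun j => (hb2 j).mpr hc,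
                fun i => (hl i).mpr hc, fun i => (hr i).mpr hc⟩
            · exact hHi ⟨fun j => Nat.le_of_not_lt fun hlt => hc ((ht j).mp hlt),
                fun j => Nat.le_of_not_lt fun hlt => hc ((hb2 j).mp hlt),
                fun i => Nat.le_of_not_lt fun hlt => hc ((hl i).mp hlt),
                fun i => Nat.le_of_not_lt fun hlt => hc ((hr i).mp hlt)⟩
          rw [show (chi (composed AG AZ AT) a b).col C = 0 from hz]
          exact Submodule.zero_mem _
        · have hab' : a = 0 ∨ b = 0 := by omega
          have hD1 : 0 < D1 := by
            by_contra hD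
            push_neg at hD
            exact hHi ⟨fun j => by omega, fun j => by omega, fun i => by omega, fun i => by omega⟩
          apply Submodule.mem_sup_left
          refine ⟨fun s1 => chi AG a b s1
            ((fun _ => ⟨0, hD1⟩, fun _ => ⟨0, hD1⟩, fun _ => ⟨0, hD1⟩, fun _ => ⟨0, hD1⟩) :
              BIdx D1 a b), col_mem _ _, funext fun s => ?_⟩
          rw [Matrix.mulVecLin_apply, iota1_mulVec, Matrix.col_apply,
            chi_degenerate (composed AG AZ AT) hab' s C]
          rw [dif_pos]
          · exact chi_degenerate AG hab' _ _
          · intro p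
            rcases hab' with hh | hh
            exacts [absurd p.1.isLt (by omega), absurd p.2.isLt (by omega)]
  · apply sup_le
    · rw [Matrix.range_mulVecLin (chi AG a b), Submodule.map_span, Submodule.span_le]
      rintro _ ⟨_, ⟨C1, rfl⟩, rfl⟩
      simp only [SetLike.mem_coe]
      refine ⟨Pi.single (mapB (embLo (n := D2 * D3)) C1) 1, funext fun s => ?_⟩
      rw [Matrix.mulVecLin_apply, Matrix.mulVec_single]
      show chi (composed AG AZ AT) a b s (mapB embLo C1) * 1 = _
      rw [mul_one, chi_composed_emb1, Matrix.mulVecLin_apply, iota1_mulVec]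
      rfl
    · rw [Submodule.map_le_iff_le_comap]
      unfold subspaceTensor
      rw [Submodule.span_le]
      rintro f ⟨g, hg, t, ht, rfl⟩
      obtain ⟨v, rfl⟩ := hg
      obtain ⟨w, rfl⟩ := ht
      simp only [SetLike.mem_coe, Submodule.mem_comap]
      have hexp : (fun s1 : Sites a b → Fin d2 × Fin d3 =>
          ((chi AZ a b).mulVecLin v) (fun p => (s1 p).1) *
          ((chi AT a b).mulVecLin w) (fun p => (s1 p).2)) =
          ∑ C2 : BIdx D2 a b, ∑ C3 : BIdx D3 a b, (v C2 * w C3) •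
            (fun s1 : Sites a b → Fin d2 × Fin d3 =>
              chi AZ a b (fun p => (s1 p).1) C2 * chi AT a b (fun p => (s1 p).2) C3) := by
        funext s1
        simp only [Matrix.mulVecLin_apply, Matrix.mulVec, dotProduct, Finset.sum_apply,
          Pi.smul_apply, smul_eq_mul]
        rw [Finset.sum_mul_sum]
        exact Finset.sum_congr rfl fun C2 _ => Finset.sum_congr rfl fun C3 _ => by ring
      rw [hexp, map_sum]
      apply Submodule.sum_mem
      intro C2 _
      rw [map_sum]
      apply Submodule.sum_mem
      intro C3 _
      rw [LinearMap.map_smul]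
      apply Submodule.smul_mem
      refine ⟨Pi.single (zipB D1 C2 C3) 1, funext fun s => ?_⟩
      rw [Matrix.mulVecLin_apply, Matrix.mulVec_single]
      show chi (composed AG AZ AT) a b s (zipB D1 C2 C3) * 1 = _
      rw [mul_one, chi_composed_emb2, Matrix.mulVecLin_apply]
      rw [iota2_mulVec]
      try rfl
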